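/- Two finite EESs are pomset trace equivalent if and only if they are isomorphic; consequently for finite EESs the equivalences ≅, hereditary history preserving bisimilarity, history preserving bisimilarity, weak history preserving bisimilarity, pomset bisimilarity, and pomset trace equivalence all coincide. -/

import Mathlib

/-- A labelled prime event structure over alphabet `A`. -/
structure PES (A : Type*) where
  E : Type*
  le : E → E → Prop
  conflict : E → E → Prop
  lab : E → A
  le_refl : ∀ e, le e e
  le_trans : ∀ e e' e'', le e e' → le e' e'' → le e e''
  le_antisymm : ∀ e e', le e e' → le e' e → e = e'
  finite_past : ∀ e, Set.Finite {e' | le e' e ∧ e' ≠ e}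
  conflict_irrefl : ∀ e, ¬ conflict e e
  conflict_symm : ∀ e e', conflict e e' → conflict e' e
  conflict_inherit : ∀ e e' e'', le e e' → e ≠ e' → conflict e e'' → conflict e' e''

namespace PES

variable {A : Type*}

/-- A coherence space: a PES with empty (strict) causality. -/
def IsCS (P : PES A) : Prop := ∀ e e', P.le e e' → e = e'

/-- An elementary event structure: a PES with empty conflict. -/
def IsEES (P : PES A) : Prop := ∀ e e', ¬ P.conflict e e'

/-- Concurrency. -/
def co (P : PES A) (e e' : P.E) : Prop :=
  ¬ P.le e e' ∧ ¬ P.le e' e ∧ ¬ P.conflict e e'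

/-- Configurations: finite, conflict-free, downward-closed sets of events. -/
def Config (P : PES A) (X : Set P.E) : Prop :=
  X.Finite ∧ (∀ e ∈ X, ∀ e' ∈ X, ¬ P.conflict e e') ∧
    (∀ e ∈ X, ∀ e', P.le e' e → e' ∈ X)

/-- Single-event labelled transition between configurations. -/
def Trans (P : PES A) (X : Set P.E) (a : A) (X' : Set P.E) : Prop :=
  P.Config X ∧ P.Config X' ∧ ∃ e, e ∉ X ∧ X' = insert e X ∧ P.lab e = a

/-- `X` can perform the sequential trace `w`. -/
def TraceFrom (P : PES A) : Set P.E → List A → Prop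
  | X, [] => P.Config X
  | X, a :: w => ∃ X', P.Trans X a X' ∧ P.TraceFrom X' w

/-- Sequential traces of a PES. -/
def STr (P : PES A) (w : List A) : Prop := P.TraceFrom ∅ w

/-- Interleaving trace equivalence. -/
def ITrEq (P Q : PES A) : Prop := ∀ w : List A, P.STr w ↔ Q.STr w

/-- Interleaving bisimulation. -/
def IBisim (P Q : PES A) (R : Set P.E → Set Q.E → Prop) : Prop :=
  R ∅ ∅ ∧ ∀ X Y, R X Y →
    (∀ a X', P.Trans X a X' → ∃ Y', Q.Trans Y a Y' ∧ R X' Y') ∧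
    (∀ a Y', Q.Trans Y a Y' → ∃ X', P.Trans X a X' ∧ R X' Y')

/-- Interleaving bisimilarity. -/
def IBisimilar (P Q : PES A) : Prop := ∃ R, IBisim P Q R

/-- Step transition, labelled by the multiset of labels of a nonempty set of
pairwise concurrent events added at once. -/
def StepTrans (P : PES A) (X : Set P.E) (m : Multiset A) (X' : Set P.E) : Prop :=
  P.Config X ∧ P.Config X' ∧ X ⊆ X' ∧ ∃ G : Finset P.E, ↑G = X' \ X ∧ G.Nonempty ∧
    (∀ e ∈ G, ∀ e' ∈ G, e ≠ e' → P.co e e') ∧ Multiset.map P.lab G.val = m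

/-- `X` can perform the step trace `s`. -/
def StepTraceFrom (P : PES A) : Set P.E → List (Multiset A) → Prop
  | X, [] => P.Config X
  | X, m :: s => ∃ X', P.StepTrans X m X' ∧ P.StepTraceFrom X' s

/-- Step traces of a PES. -/
def StTr (P : PES A) (s : List (Multiset A)) : Prop := P.StepTraceFrom ∅ s

/-- Step trace equivalence. -/
def STrEq (P Q : PES A) : Prop := ∀ s : List (Multiset A), P.StTr s ↔ Q.StTr s

/-- Step bisimulation. -/
def SBisim (P Q : PES A) (R : Set P.E → Set Q.E → Prop) : Prop :=
  R ∅ ∅ ∧ ∀ X Y, R X Y →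
    (∀ m X', P.StepTrans X m X' → ∃ Y', Q.StepTrans Y m Y' ∧ R X' Y') ∧
    (∀ m Y', Q.StepTrans Y m Y' → ∃ X', P.StepTrans X m X' ∧ R X' Y')

/-- Step bisimilarity. -/
def SBisimilar (P Q : PES A) : Prop := ∃ R, SBisim P Q R

/-- `f` restricts to a label-preserving order-isomorphism from `X` onto `Y`. -/
def IsoOn (P Q : PES A) (f : P.E → Q.E) (X : Set P.E) (Y : Set Q.E) : Prop :=
  Set.BijOn f X Y ∧ (∀ e ∈ X, ∀ e' ∈ X, (P.le e e' ↔ Q.le (f e) (f e'))) ∧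
    ∀ e ∈ X, Q.lab (f e) = P.lab e

/-- The labelled posets induced by `X` and `Y` are isomorphic (same pomset). -/
def PIso (P Q : PES A) (X : Set P.E) (Y : Set Q.E) : Prop :=
  ∃ f, IsoOn P Q f X Y

/-- Pomset trace equivalence: same sets of pomsets of configurations. -/
def PTrEq (P Q : PES A) : Prop :=
  (∀ X, P.Config X → ∃ Y, Q.Config Y ∧ PIso P Q X Y) ∧
  (∀ Y, Q.Config Y → ∃ X, P.Config X ∧ PIso P Q X Y)

/-- Pomset transition: strictly extending a configuration. -/
def PomTrans (P : PES A) (X X' : Set P.E) : Prop :=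
  P.Config X ∧ P.Config X' ∧ X ⊂ X'

/-- Pomset bisimulation: matched extensions must add isomorphic pomsets. -/
def PBisim (P Q : PES A) (R : Set P.E → Set Q.E → Prop) : Prop :=
  R ∅ ∅ ∧ ∀ X Y, R X Y →
    (∀ X', P.PomTrans X X' →
      ∃ Y', Q.PomTrans Y Y' ∧ PIso P Q (X' \ X) (Y' \ Y) ∧ R X' Y') ∧
    (∀ Y', Q.PomTrans Y Y' →
      ∃ X', P.PomTrans X X' ∧ PIso P Q (X' \ X) (Y' \ Y) ∧ R X' Y')

/-- Pomset bisimilarity. -/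
def PBisimilar (P Q : PES A) : Prop := ∃ R, PBisim P Q R

/-- Weak history preserving bisimulation. -/
def WHBisim (P Q : PES A) (R : Set P.E → Set Q.E → Prop) : Prop :=
  R ∅ ∅ ∧ ∀ X Y, R X Y → PIso P Q X Y ∧
    (∀ a X', P.Trans X a X' → ∃ Y', Q.Trans Y a Y' ∧ R X' Y') ∧
    (∀ a Y', Q.Trans Y a Y' → ∃ X', P.Trans X a X' ∧ R X' Y')

/-- Weak history preserving bisimilarity. -/
def WHBisimilar (P Q : PES A) : Prop := ∃ R, WHBisim P Q R

/-- History preserving bisimulation: triples `(X, Y, f)`. -/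
def HBisim (P Q : PES A) (R : Set P.E → Set Q.E → (P.E → Q.E) → Prop) : Prop :=
  (∃ f, R ∅ ∅ f) ∧ ∀ X Y f, R X Y f → IsoOn P Q f X Y ∧
    (∀ a X', P.Trans X a X' →
      ∃ Y' f', Q.Trans Y a Y' ∧ R X' Y' f' ∧ ∀ e ∈ X, f' e = f e) ∧
    (∀ a Y', Q.Trans Y a Y' →
      ∃ X' f', P.Trans X a X' ∧ R X' Y' f' ∧ ∀ e ∈ X, f' e = f e)

/-- History preserving bisimilarity. -/
def HBisimilar (P Q : PES A) : Prop := ∃ R, HBisim P Q R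

/-- Closure under backward transitions, as needed for hereditary hp-bisimulations. -/
def Hereditary (P Q : PES A) (R : Set P.E → Set Q.E → (P.E → Q.E) → Prop) : Prop :=
  ∀ X Y f, R X Y f →
    (∀ a X', P.Trans X' a X → R X' (f '' X') f) ∧
    (∀ a Y', Q.Trans Y' a Y → R {e ∈ X | f e ∈ Y'} Y' f)

/-- Hereditary history preserving bisimilarity. -/
def HHBisimilar (P Q : PES A) : Prop := ∃ R, HBisim P Q R ∧ Hereditary P Q R

/-- Isomorphism of PESs. -/
def Iso (P Q : PES A) : Prop :=
  ∃ f : P.E ≃ Q.E, (∀ e e', P.le e e' ↔ Q.le (f e) (f e')) ∧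
    (∀ e e', P.conflict e e' ↔ Q.conflict (f e) (f e')) ∧
    ∀ e, Q.lab (f e) = P.lab e

end PES


section Aux

open Set PES

variable {A : Type*}

lemma aux_config_empty (P : PES A) : P.Config ∅ := by
  refine ⟨finite_empty, ?_, ?_⟩ <;> simp

lemma aux_config_univ (P : PES A) (hP : P.IsEES) (h : Finite P.E) : P.Config univ :=
  ⟨finite_univ, fun e _ e' _ => hP e e', fun _ _ _ _ => mem_univ _⟩

lemma aux_exists_max (P : PES A) {X : Set P.E} (hfin : X.Finite) (hne : X.Nonempty) :
    ∃ e ∈ X, ∀ e' ∈ X, P.le e e' → e' = e := by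
  letI : PartialOrder P.E :=
    { le := P.le
      le_refl := P.le_refl
      le_trans := P.le_trans
      le_antisymm := P.le_antisymm }
  obtain ⟨e, he, hmax⟩ := Set.Finite.exists_maximalFor id X hfin hne
  exact ⟨e, he, fun e' he' hle => P.le_antisymm _ _ (hmax he' hle) hle⟩

lemma aux_reach (P : PES A) (hP : P.IsEES) (S : Set P.E → Prop) (h0 : S ∅)
    (hstep : ∀ X a X', S X → P.Trans X a X' → S X') :
    ∀ X, P.Config X → S X := by
  have key : ∀ n X, P.Config X → X.ncard = n → S X := by
    intro n
    induction n using Nat.strong_induction_on with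
    | _ n ih =>
      intro X hX hn
      rcases eq_empty_or_nonempty X with rfl | hne
      · exact h0
      · obtain ⟨e, he, hmax⟩ := aux_exists_max P hX.1 hne
        have hX' : P.Config (X \ {e}) := by
          refine ⟨hX.1.diff, fun a _ b _ => hP a b, ?_⟩
          intro a ha b hba
          simp only [Set.mem_diff, Set.mem_singleton_iff] at ha ⊢
          refine ⟨hX.2.2 a ha.1 b hba, fun hbe => ha.2 ?_⟩
          subst hbe
          exact hmax a ha.1 hba
        have htr : P.Trans (X \ {e}) (P.lab e) X :=
          ⟨hX', hX, e, by simp, by rw [Set.insert_diff_singleton, Set.insert_eq_self.2 he], rfl⟩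
        have hlt : (X \ {e}).ncard < n := by
          rw [← hn]; exact Set.ncard_diff_singleton_lt_of_mem he hX.1
        exact hstep _ _ _ (ih _ hlt _ hX' rfl) htr
  intro X hX
  exact key _ X hX rfl

end Aux

section Iso

open Set PES

variable {A : Type*} {P Q : PES A}

lemma aux_image_config (hQ : Q.IsEES) (f : P.E ≃ Q.E)
    (hle : ∀ x y, P.le x y ↔ Q.le (f x) (f y)) {X : Set P.E} (hX : P.Config X) :
    Q.Config (⇑f '' X) := by
  refine ⟨hX.1.image _, fun a _ b _ => hQ a b, ?_⟩
  rintro _ ⟨x, hx, rfl⟩ q hq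
  refine ⟨f.symm q, hX.2.2 x hx _ ?_, f.apply_symm_apply q⟩
  rw [hle]
  simpa using hq

lemma aux_preimage_config (hP : P.IsEES) (f : P.E ≃ Q.E)
    (hle : ∀ x y, P.le x y ↔ Q.le (f x) (f y)) {Y : Set Q.E} (hY : Q.Config Y) :
    P.Config (⇑f ⁻¹' Y) := by
  refine ⟨hY.1.preimage (f.injective.injOn), fun a _ b _ => hP a b, ?_⟩
  intro a ha b hba
  exact hY.2.2 _ ha _ ((hle b a).1 hba)

lemma aux_trans_image (hQ : Q.IsEES) (f : P.E ≃ Q.E)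
    (hle : ∀ x y, P.le x y ↔ Q.le (f x) (f y))
    (hlab : ∀ x, Q.lab (f x) = P.lab x)
    {X X' : Set P.E} {a : A} (h : P.Trans X a X') :
    Q.Trans (⇑f '' X) a (⇑f '' X') := by
  obtain ⟨hX, hX', e0, he0, rfl, hl⟩ := h
  refine ⟨aux_image_config hQ f hle hX, aux_image_config hQ f hle hX', f e0, ?_,
    by rw [Set.image_insert_eq], by rw [hlab, hl]⟩
  intro hc
  obtain ⟨x, hx, hfx⟩ := hc
  exact he0 (f.injective hfx ▸ hx)

lemma aux_trans_back (hP : P.IsEES) (f : P.E ≃ Q.E)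
    (hle : ∀ x y, P.le x y ↔ Q.le (f x) (f y))
    (hlab : ∀ x, Q.lab (f x) = P.lab x)
    {X : Set P.E} {Y' : Set Q.E} {a : A} (hX : P.Config X)
    (h : Q.Trans (⇑f '' X) a Y') :
    P.Trans X a (⇑f ⁻¹' Y') ∧ ⇑f '' (⇑f ⁻¹' Y') = Y' := by
  obtain ⟨hY, hY', q, hq, rfl, hl⟩ := h
  have himg : ⇑f '' (⇑f ⁻¹' (insert q (⇑f '' X))) = insert q (⇑f '' X) :=
    Set.image_preimage_eq _ f.surjective
  have hpre : ⇑f ⁻¹' (insert q (⇑f '' X)) = insert (f.symm q) X := by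
    rw [show insert q (⇑f '' X) = ⇑f '' (insert (f.symm q) X) by
      rw [Set.image_insert_eq, f.apply_symm_apply],
      Set.preimage_image_eq _ f.injective]
  refine ⟨⟨hX, ?_, f.symm q, ?_, hpre, ?_⟩, himg⟩
  · rw [hpre]
    have : P.Config (⇑f ⁻¹' (insert q (⇑f '' X))) :=
      aux_preimage_config hP f hle hY'
    rwa [hpre] at this
  · intro hc
    exact hq ⟨f.symm q, hc, f.apply_symm_apply q⟩
  · rw [← hl, ← f.apply_symm_apply q, hlab, f.apply_symm_apply]

lemma aux_iso_hhb (hP : P.IsEES) (hQ : Q.IsEES) (h : Iso P Q) : HHBisimilar P Q := by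
  obtain ⟨f, hle, hconf, hlab⟩ := h
  refine ⟨fun X Y g => P.Config X ∧ Y = ⇑f '' X ∧ Set.EqOn g (⇑f) X, ⟨?_, ?_⟩, ?_⟩
  · exact ⟨⇑f, aux_config_empty P, by simp, fun x hx => absurd hx (Set.notMem_empty x)⟩
  · rintro X Y g ⟨hX, rfl, hg⟩
    refine ⟨⟨((f.injective.injOn).bijOn_image).congr fun x hx => (hg hx).symm, ?_, ?_⟩, ?_, ?_⟩
    · intro x hx y hy
      rw [hg hx, hg hy]
      exact hle x y
    · intro x hx
      rw [hg hx, hlab]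
    · intro a X' htr
      exact ⟨⇑f '' X', ⇑f, aux_trans_image hQ f hle hlab htr,
        ⟨htr.2.1, rfl, fun _ _ => rfl⟩, fun x hx => (hg hx).symm⟩
    · intro a Y' htr
      obtain ⟨htr', himg⟩ := aux_trans_back hP f hle hlab hX htr
      exact ⟨⇑f ⁻¹' Y', ⇑f, htr', ⟨htr'.2.1, himg.symm, fun _ _ => rfl⟩,
        fun x hx => (hg hx).symm⟩
  · rintro X Y g ⟨hX, rfl, hg⟩
    constructor
    · intro a X' htr
      obtain ⟨hX', _, e0, he0, hins, _⟩ := htr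
      have hsub : X' ⊆ X := by rw [hins]; exact Set.subset_insert _ _
      exact ⟨hX', (Set.EqOn.image_eq (hg.mono hsub)), hg.mono hsub⟩
    · intro a Y' htr
      obtain ⟨hY', hY, q, hq, hins, _⟩ := htr
      have hsubY : Y' ⊆ ⇑f '' X := by rw [hins]; exact Set.subset_insert _ _
      have hSsub : {x ∈ X | g x ∈ Y'} ⊆ X := Set.sep_subset _ _
      have hgf : ∀ x ∈ X, g x = f x := hg
      refine ⟨⟨hX.1.subset hSsub, fun a _ b _ => hP a b, ?_⟩, ?_, hg.mono hSsub⟩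
      · rintro x ⟨hx, hgx⟩ y hyx
        have hyX : y ∈ X := hX.2.2 x hx y hyx
        refine ⟨hyX, ?_⟩
        rw [hgf y hyX]
        rw [hgf x hx] at hgx
        exact hY'.2.2 _ hgx _ ((hle y x).1 hyx)
      · apply Set.Subset.antisymm
        · intro q' hq'
          obtain ⟨x, hx, rfl⟩ := hsubY hq'
          exact ⟨x, ⟨hx, by rwa [hgf x hx]⟩, rfl⟩
        · rintro _ ⟨x, ⟨hx, hgx⟩, rfl⟩
          rwa [← hgf x hx]

lemma aux_ptr_iso (hP : P.IsEES) (hQ : Q.IsEES) (hPfin : Finite P.E) (hQfin : Finite Q.E)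
    (h : PTrEq P Q) : Iso P Q := by
  obtain ⟨Y, hY, f, hf⟩ := h.1 univ (aux_config_univ P hP hPfin)
  obtain ⟨X, hX, g, hg⟩ := h.2 univ (aux_config_univ Q hQ hQfin)
  have cardPY : Nat.card P.E = Y.ncard := by
    rw [← Nat.card_coe_set_eq, ← Nat.card_congr (hf.1.equiv f),
      Nat.card_congr (Equiv.Set.univ P.E)]
  have cardQX : Nat.card Q.E = X.ncard := by
    rw [← Nat.card_coe_set_eq, Nat.card_congr (hg.1.equiv g),
      Nat.card_congr (Equiv.Set.univ Q.E)]
  have h1 : Nat.card P.E ≤ Nat.card Q.E := by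
    rw [cardPY, ← Set.ncard_univ]
    exact Set.ncard_le_ncard (subset_univ Y) finite_univ
  have h2 : Nat.card Q.E ≤ Nat.card P.E := by
    rw [cardQX, ← Set.ncard_univ]
    exact Set.ncard_le_ncard (subset_univ X) finite_univ
  have hinj : Function.Injective f := Set.injOn_univ.1 hf.1.2.1
  have hbij : Function.Bijective f :=
    (Nat.bijective_iff_injective_and_card f).2 ⟨hinj, le_antisymm h1 h2⟩
  exact ⟨Equiv.ofBijective f hbij,
    fun a b => hf.2.1 a (mem_univ a) b (mem_univ b),
    fun a b => iff_of_false (hP a b) (hQ _ _),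
    fun a => hf.2.2 a (mem_univ a)⟩

lemma aux_iso_pb (hP : P.IsEES) (hQ : Q.IsEES) (h : Iso P Q) : PBisimilar P Q := by
  obtain ⟨f, hle, hconf, hlab⟩ := h
  refine ⟨fun X Y => P.Config X ∧ Y = ⇑f '' X, ⟨⟨aux_config_empty P, by simp⟩, ?_⟩⟩
  rintro X Y ⟨hX, rfl⟩
  constructor
  · rintro X' ⟨_, hX', hss⟩
    refine ⟨⇑f '' X', ⟨aux_image_config hQ f hle hX, aux_image_config hQ f hle hX', ?_⟩,
      ⟨⇑f, ?_, ?_, ?_⟩, hX', rfl⟩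
    · exact ⟨Set.image_mono hss.subset,
        fun hc => hss.ne (f.injective.image_injective (Set.Subset.antisymm (Set.image_mono hss.subset) hc))⟩
    · rw [← Set.image_diff f.injective]
      exact f.injective.injOn.bijOn_image
    · intro x _ y _; exact hle x y
    · intro x _; exact hlab x
  · rintro Y' ⟨_, hY', hss⟩
    have hpre : P.Config (⇑f ⁻¹' Y') := aux_preimage_config hP f hle hY'
    have himg : ⇑f '' (⇑f ⁻¹' Y') = Y' := Set.image_preimage_eq _ f.surjective
    have hXss : X ⊂ ⇑f ⁻¹' Y' := by
      rw [← Set.preimage_image_eq X f.injective]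
      exact ⟨Set.preimage_mono hss.subset,
        fun hc => hss.ne (Set.Subset.antisymm hss.subset
          (by rw [← himg, ← Set.image_preimage_eq (⇑f '' X) f.surjective]
              exact Set.image_mono hc))⟩
    refine ⟨⇑f ⁻¹' Y', ⟨hX, hpre, hXss⟩, ⟨⇑f, ?_, ?_, ?_⟩, hpre, himg.symm⟩
    · rw [show Y' \ (⇑f '' X) = ⇑f '' (⇑f ⁻¹' Y' \ X) by
        rw [Set.image_diff f.injective, himg]]
      exact f.injective.injOn.bijOn_image
    · intro x _ y _; exact hle x y
    · intro x _; exact hlab x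

lemma aux_hhb_hb (h : HHBisimilar P Q) : HBisimilar P Q := by
  obtain ⟨R, hR, _⟩ := h; exact ⟨R, hR⟩

lemma aux_hb_whb (h : HBisimilar P Q) : WHBisimilar P Q := by
  obtain ⟨R, hR⟩ := h
  refine ⟨fun X Y => ∃ g, R X Y g, ?_, ?_⟩
  · exact hR.1
  · rintro X Y ⟨g, hg⟩
    obtain ⟨hiso, hfwd, hbwd⟩ := hR.2 X Y g hg
    refine ⟨⟨g, hiso⟩, ?_, ?_⟩
    · intro a X' htr
      obtain ⟨Y', g', hQtr, hR', _⟩ := hfwd a X' htr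
      exact ⟨Y', hQtr, g', hR'⟩
    · intro a Y' htr
      obtain ⟨X', g', hPtr, hR', _⟩ := hbwd a Y' htr
      exact ⟨X', hPtr, g', hR'⟩

lemma aux_whb_ptr (hP : P.IsEES) (hQ : Q.IsEES) (h : WHBisimilar P Q) : PTrEq P Q := by
  obtain ⟨R, hR⟩ := h
  constructor
  · intro X hX
    have key : ∃ Y, R X Y ∧ Q.Config Y := by
      refine aux_reach P hP (fun X => ∃ Y, R X Y ∧ Q.Config Y)
        ⟨∅, hR.1, aux_config_empty Q⟩ ?_ X hX
      rintro X a X' ⟨Y, hRXY, _⟩ htr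
      obtain ⟨Y', hQtr, hR'⟩ := (hR.2 X Y hRXY).2.1 a X' htr
      exact ⟨Y', hR', hQtr.2.1⟩
    obtain ⟨Y, hRXY, hYc⟩ := key
    exact ⟨Y, hYc, (hR.2 X Y hRXY).1⟩
  · intro Y hY
    have key : ∃ X, R X Y ∧ P.Config X := by
      refine aux_reach Q hQ (fun Y => ∃ X, R X Y ∧ P.Config X)
        ⟨∅, hR.1, aux_config_empty P⟩ ?_ Y hY
      rintro Y a Y' ⟨X, hRXY, _⟩ htr
      obtain ⟨X', hPtr, hR'⟩ := (hR.2 X Y hRXY).2.2 a Y' htr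
      exact ⟨X', hR', hPtr.2.1⟩
    obtain ⟨X, hRXY, hXc⟩ := key
    exact ⟨X, hXc, (hR.2 X Y hRXY).1⟩

lemma aux_piso_empty (f : P.E → Q.E) : PIso P Q ∅ ∅ :=
  ⟨f, Set.bijOn_empty f, fun x hx => absurd hx (Set.notMem_empty x),
    fun x hx => absurd hx (Set.notMem_empty x)⟩

lemma aux_pb_ptr (hP : P.IsEES) (hQ : Q.IsEES) (hPfin : Finite P.E) (hQfin : Finite Q.E)
    (h : PBisimilar P Q) : PTrEq P Q := by
  obtain ⟨R, hR⟩ := h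
  have hfun : Nonempty (P.E → Q.E) := by
    rcases isEmpty_or_nonempty P.E with hE | hE
    · exact ⟨fun x => (hE.false x).elim⟩
    rcases isEmpty_or_nonempty Q.E with hE' | hE'
    · exfalso
      obtain ⟨Y', hPom, _, _⟩ := (hR.2 ∅ ∅ hR.1).1 univ
        ⟨aux_config_empty P, aux_config_univ P hP hPfin, Set.empty_ssubset.2 univ_nonempty⟩
      obtain ⟨q, _⟩ := Set.empty_ssubset.1 hPom.2.2
      exact hE'.false q
    · exact ⟨fun _ => hE'.some⟩
  constructor
  · intro X hX
    rcases eq_empty_or_nonempty X with rfl | hne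
    · exact ⟨∅, aux_config_empty Q, aux_piso_empty hfun.some⟩
    · obtain ⟨Y', hPom, hpiso, _⟩ := (hR.2 ∅ ∅ hR.1).1 X
        ⟨aux_config_empty P, hX, Set.empty_ssubset.2 hne⟩
      refine ⟨Y', hPom.2.1, ?_⟩
      rwa [Set.diff_empty, Set.diff_empty] at hpiso
  · intro Y hY
    rcases eq_empty_or_nonempty Y with rfl | hne
    · exact ⟨∅, aux_config_empty P, aux_piso_empty hfun.some⟩
    · obtain ⟨X', hPom, hpiso, _⟩ := (hR.2 ∅ ∅ hR.1).2 Y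
        ⟨aux_config_empty Q, hY, Set.empty_ssubset.2 hne⟩
      refine ⟨X', hPom.2.1, ?_⟩
      rwa [Set.diff_empty, Set.diff_empty] at hpiso

end Iso

theorem finite_ees_spectrum_collapse {A : Type*} (P Q : PES A)
    (hP : P.IsEES) (hQ : Q.IsEES) (hPfin : Finite P.E) (hQfin : Finite Q.E) :
    (PES.PTrEq P Q ↔ PES.Iso P Q) ∧
    (PES.HHBisimilar P Q ↔ PES.Iso P Q) ∧
    (PES.HBisimilar P Q ↔ PES.Iso P Q) ∧
    (PES.WHBisimilar P Q ↔ PES.Iso P Q) ∧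
    (PES.PBisimilar P Q ↔ PES.Iso P Q) := by
  have ptr_iso := aux_ptr_iso hP hQ hPfin hQfin
  have iso_hhb := aux_iso_hhb hP hQ
  have iso_ptr : PES.Iso P Q → PES.PTrEq P Q := fun h =>
    aux_whb_ptr hP hQ (aux_hb_whb (aux_hhb_hb (iso_hhb h)))
  refine ⟨⟨ptr_iso, iso_ptr⟩, ⟨fun h => ptr_iso (aux_whb_ptr hP hQ (aux_hb_whb (aux_hhb_hb h))), iso_hhb⟩,
    ⟨fun h => ptr_iso (aux_whb_ptr hP hQ (aux_hb_whb h)), fun h => aux_hhb_hb (iso_hhb h)⟩,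
    ⟨fun h => ptr_iso (aux_whb_ptr hP hQ h), fun h => aux_hb_whb (aux_hhb_hb (iso_hhb h))⟩,
    ⟨fun h => ptr_iso (aux_pb_ptr hP hQ hPfin hQfin h), aux_iso_pb hP hQ⟩⟩
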